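/- Limit at −∞ of bounded-below eternal solutions: Assume the Harnack inequality u(s, z₂) ≤ C u(t, z₁) exp(C|z₁−z₂|²/(t−s)) holds for all nonnegative solutions of ∂_t u = ℒu on (−∞, T]. Let u be a solution on (−∞,T] × closure(ℝ^{N+1}_+) with L = inf u > −∞. Then for every z ∈ ℝ^{N+1}_+, lim_{t→−∞} u(t, z) = L. -/

import Mathlib

open Set

/-- Partial derivative in the `i`-th `x`-direction. -/
noncomputable def pX {N : ℕ} (i : Fin N) (f : EuclideanSpace ℝ (Fin N) → ℝ)
    (x : EuclideanSpace ℝ (Fin N)) : ℝ :=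
  fderiv ℝ f x (EuclideanSpace.single i 1)

/-- The Bessel operator `ℒ v = Δ_x v + 2a·∇_x D_y v + D_yy v + (c/y) D_y v`. -/
noncomputable def Lop {N : ℕ} (a : EuclideanSpace ℝ (Fin N)) (c : ℝ)
    (v : EuclideanSpace ℝ (Fin N) → ℝ → ℝ)
    (x : EuclideanSpace ℝ (Fin N)) (y : ℝ) : ℝ :=
  (∑ i, pX i (fun x' => pX i (fun x'' => v x'' y) x') x)
  + 2 * ∑ i, a i * pX i (fun x' => deriv (v x') y) x
  + deriv (deriv (v x)) y
  + c / y * deriv (v x) y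

/-- Time derivative `∂_t u`. -/
noncomputable def Dt {N : ℕ} (u : ℝ → EuclideanSpace ℝ (Fin N) → ℝ → ℝ)
    (t : ℝ) (x : EuclideanSpace ℝ (Fin N)) (y : ℝ) : ℝ :=
  deriv (fun s => u s x y) t

/-- `u ∈ C^{1,2}(S)`: `u`, `∂_t u` and all first and second spatial derivatives
exist and are continuous on `S ⊆ ℝ × ℝ^N × [0,∞)` (derivatives taken up to the
boundary). -/
def C12On {N : ℕ} (u : ℝ → EuclideanSpace ℝ (Fin N) → ℝ → ℝ)
    (S : Set (ℝ × EuclideanSpace ℝ (Fin N) × ℝ)) : Prop :=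
  ContinuousOn (fun p => u p.1 p.2.1 p.2.2) S ∧
  ContinuousOn (fun p => Dt u p.1 p.2.1 p.2.2) S ∧
  ContinuousOn (fun p => deriv (u p.1 p.2.1) p.2.2) S ∧
  ContinuousOn (fun p => deriv (deriv (u p.1 p.2.1)) p.2.2) S ∧
  (∀ i, ContinuousOn (fun p => pX i (fun x => u p.1 x p.2.2) p.2.1) S) ∧
  (∀ i j, ContinuousOn
    (fun p => pX i (fun x => pX j (fun x' => u p.1 x' p.2.2) x) p.2.1) S) ∧
  (∀ i, ContinuousOn (fun p => pX i (fun x => deriv (u p.1 x) p.2.2) p.2.1) S)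

/-- A classical solution of `∂_t v = ℒv` on `[0,S] × closure(ℝ^{N+1}_+)`:
`v ∈ C^{1,2}((0,S] × closure) ∩ C([0,S] × closure)` solving the equation. -/
def SolOnIcc {N : ℕ} (a : EuclideanSpace ℝ (Fin N)) (c S : ℝ)
    (v : ℝ → EuclideanSpace ℝ (Fin N) → ℝ → ℝ) : Prop :=
  C12On v (Ioc 0 S ×ˢ (univ : Set (EuclideanSpace ℝ (Fin N))) ×ˢ Ici 0) ∧
  ContinuousOn (fun p => v p.1 p.2.1 p.2.2)
    (Icc 0 S ×ˢ (univ : Set (EuclideanSpace ℝ (Fin N))) ×ˢ Ici 0) ∧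
  (∀ t ∈ Ioc (0:ℝ) S, ∀ x, ∀ y : ℝ, 0 < y → Dt v t x y = Lop a c (v t) x y)

/-- A classical solution of `∂_t u = ℒu` on `(-∞,T] × closure(ℝ^{N+1}_+)`:
`u ∈ C^{1,2}((-∞,T] × closure)` solving the equation. -/
def SolOnIic {N : ℕ} (a : EuclideanSpace ℝ (Fin N)) (c T : ℝ)
    (u : ℝ → EuclideanSpace ℝ (Fin N) → ℝ → ℝ) : Prop :=
  C12On u (Iic T ×ˢ (univ : Set (EuclideanSpace ℝ (Fin N))) ×ˢ Ici 0) ∧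
  (∀ t ≤ T, ∀ x, ∀ y : ℝ, 0 < y → Dt u t x y = Lop a c (u t) x y)


private lemma deriv_sub_const_fun_aux (f : ℝ → ℝ) (c : ℝ) :
    deriv (fun y => f y - c) = deriv f := funext fun _ => deriv_sub_const c

private lemma Dt_sub_const {N : ℕ} (u : ℝ → EuclideanSpace ℝ (Fin N) → ℝ → ℝ) (L : ℝ) :
    Dt (fun t x y => u t x y - L) = Dt u := by
  funext t x y
  simp only [Dt, deriv_sub_const]

private lemma Lop_sub_const {N : ℕ} (a : EuclideanSpace ℝ (Fin N)) (c L : ℝ)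
    (v : EuclideanSpace ℝ (Fin N) → ℝ → ℝ) :
    Lop a c (fun x y => v x y - L) = Lop a c v := by
  funext x y
  simp only [Lop, pX, fderiv_sub_const, deriv_sub_const, deriv_sub_const_fun_aux]

private lemma C12On_sub_const {N : ℕ} (u : ℝ → EuclideanSpace ℝ (Fin N) → ℝ → ℝ) (L : ℝ)
    (S : Set (ℝ × EuclideanSpace ℝ (Fin N) × ℝ)) (h : C12On u S) :
    C12On (fun t x y => u t x y - L) S := by
  obtain ⟨h1, h2, h3, h4, h5, h6, h7⟩ := h
  refine ⟨h1.sub continuousOn_const, ?_, ?_, ?_, ?_, ?_, ?_⟩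
  · simpa only [Dt_sub_const] using h2
  · simpa only [deriv_sub_const] using h3
  · simpa only [deriv_sub_const_fun_aux] using h4
  · intro i; simpa only [pX, fderiv_sub_const] using h5 i
  · intro i j; simpa only [pX, fderiv_sub_const] using h6 i j
  · intro i; simpa only [pX, fderiv_sub_const, deriv_sub_const] using h7 i

private lemma SolOnIic_sub_const {N : ℕ} (a : EuclideanSpace ℝ (Fin N)) (c T L : ℝ)
    (u : ℝ → EuclideanSpace ℝ (Fin N) → ℝ → ℝ) (h : SolOnIic a c T u) :
    SolOnIic a c T (fun t x y => u t x y - L) := by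
  refine ⟨C12On_sub_const u L _ h.1, fun t ht x y hy => ?_⟩
  simp only [Dt_sub_const, Lop_sub_const]
  exact h.2 t ht x y hy

/-- Proposition 7.2(i) (limit at `-∞` of eternal solutions bounded below):
assume the Harnack inequality
`v(s,z₂) ≤ C v(t,z₁) exp(C|z₁-z₂|²/(t-s))` holds for all nonnegative solutions
on `(-∞,T]`. If `u` is a solution on `(-∞,T]` with `L = inf u > -∞`, then
`u(t,z) → L` as `t → -∞`, for every `z ∈ ℝ^{N+1}_+`. -/
theorem stmt_17 {N : ℕ} (a : EuclideanSpace ℝ (Fin N)) (c T : ℝ)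
    (hc : c + 1 > 0) (ha : ‖a‖ < 1) (C : ℝ) (hC : 0 < C)
    (hHarnack : ∀ v, SolOnIic a c T v →
      (∀ t ≤ T, ∀ x, ∀ y : ℝ, 0 ≤ y → 0 ≤ v t x y) →
      ∀ s t : ℝ, s < t → t ≤ T →
        ∀ x₁ x₂ : EuclideanSpace ℝ (Fin N), ∀ y₁ y₂ : ℝ, 0 < y₁ → 0 < y₂ →
          v s x₂ y₂ ≤ C * v t x₁ y₁ *
            Real.exp (C * (‖x₁ - x₂‖ ^ 2 + (y₁ - y₂) ^ 2) / (t - s)))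
    (u : ℝ → EuclideanSpace ℝ (Fin N) → ℝ → ℝ)
    (hu : SolOnIic a c T u) (L : ℝ)
    (hL : IsGLB {r : ℝ | ∃ t x y, t ≤ T ∧ 0 ≤ y ∧ u t x y = r} L) :
    ∀ x : EuclideanSpace ℝ (Fin N), ∀ y : ℝ, 0 < y →
      Filter.Tendsto (fun t => u t x y) Filter.atBot (nhds L) := by
  intro x y hy
  have hlb : ∀ t ≤ T, ∀ x', ∀ y' : ℝ, 0 ≤ y' → L ≤ u t x' y' := fun t ht x' y' hy' =>
    hL.1 ⟨t, x', y', ht, hy', rfl⟩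
  set w : ℝ → EuclideanSpace ℝ (Fin N) → ℝ → ℝ := fun t x y => u t x y - L with hwdef
  have hwsol : SolOnIic a c T w := SolOnIic_sub_const a c T L u hu
  have hwnn : ∀ t ≤ T, ∀ x', ∀ y' : ℝ, 0 ≤ y' → 0 ≤ w t x' y' := fun t ht x' y' hy' =>
    sub_nonneg.2 (hlb t ht x' y' hy')
  rw [tendsto_order]
  constructor
  · intro l hl
    filter_upwards [Filter.eventually_le_atBot T] with s hs
    exact lt_of_lt_of_le hl (hlb s hs x y hy.le)
  · intro r hr
    set ε := r - L with hε
    have hεpos : 0 < ε := sub_pos.2 hr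
    have hε2C : 0 < ε / (2 * C) := div_pos hεpos (by linarith)
    -- find a point with value close to the infimum, with y₁ > 0
    obtain ⟨t₁, ht₁, x₁, y₁, hy₁, hval⟩ :
        ∃ t₁ ≤ T, ∃ x₁, ∃ y₁ : ℝ, 0 < y₁ ∧ u t₁ x₁ y₁ < L + ε / (2 * C) := by
      obtain ⟨ρ, hρmem, _, hρlt⟩ := hL.exists_between (by linarith : L < L + ε / (2 * C))
      obtain ⟨t₁, x₁, y₁, ht₁, hy₁0, heq⟩ := hρmem
      rcases lt_or_eq_of_le hy₁0 with hy₁pos | hy₁zero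
      · exact ⟨t₁, ht₁, x₁, y₁, hy₁pos, heq ▸ hρlt⟩
      · -- y₁ = 0 : use continuity in y to move slightly into the interior
        have hcwa : Filter.Tendsto (fun p : ℝ × EuclideanSpace ℝ (Fin N) × ℝ => u p.1 p.2.1 p.2.2)
            (nhdsWithin (t₁, x₁, (0:ℝ)) (Iic T ×ˢ (univ : Set (EuclideanSpace ℝ (Fin N))) ×ˢ Ici 0))
            (nhds (u t₁ x₁ 0)) :=
          hu.1.1 (t₁, x₁, (0:ℝ)) ⟨ht₁, mem_univ _, by norm_num⟩
        have hφ : Filter.Tendsto (fun y' : ℝ => ((t₁, x₁, y') : ℝ × EuclideanSpace ℝ (Fin N) × ℝ))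
            (nhdsWithin 0 (Ioi 0))
            (nhdsWithin (t₁, x₁, (0:ℝ)) (Iic T ×ˢ (univ : Set (EuclideanSpace ℝ (Fin N))) ×ˢ Ici 0)) := by
          rw [tendsto_nhdsWithin_iff]
          constructor
          · exact ((continuous_const.prodMk (continuous_const.prodMk continuous_id)).tendsto 0).mono_left
              nhdsWithin_le_nhds
          · filter_upwards [self_mem_nhdsWithin] with y' hy'
            exact ⟨ht₁, mem_univ _, show (0:ℝ) ≤ y' from le_of_lt hy'⟩
        have htend : Filter.Tendsto (fun y' : ℝ => u t₁ x₁ y') (nhdsWithin 0 (Ioi 0))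
            (nhds (u t₁ x₁ 0)) := hcwa.comp hφ
        have h0lt : u t₁ x₁ 0 < L + ε / (2 * C) := by rw [hy₁zero, heq]; exact hρlt
        have hev : ∀ᶠ y' in nhdsWithin (0:ℝ) (Ioi 0),
            u t₁ x₁ y' < L + ε / (2 * C) ∧ y' ∈ Ioi (0:ℝ) :=
          (htend.eventually (Filter.Tendsto.eventually_lt_const h0lt Filter.tendsto_id)).and
            self_mem_nhdsWithin
        obtain ⟨y', hy'lt, hy'pos⟩ := hev.exists
        exact ⟨t₁, ht₁, x₁, y', hy'pos, hy'lt⟩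
    set δ := u t₁ x₁ y₁ - L with hδdef
    have hδ0 : 0 ≤ δ := sub_nonneg.2 (hlb t₁ ht₁ x₁ y₁ hy₁.le)
    have hδlt : δ < ε / (2 * C) := by rw [hδdef]; linarith
    set D := ‖x₁ - x‖ ^ 2 + (y₁ - y) ^ 2 with hD
    clear_value δ D
    have hsub : Filter.Tendsto (fun s : ℝ => t₁ - s) Filter.atBot Filter.atTop := by
      have := Filter.tendsto_atTop_add_const_left Filter.atBot t₁
        (Filter.tendsto_neg_atBot_atTop)
      simpa [sub_eq_add_neg] using this
    have hlim : Filter.Tendsto (fun s => C * D / (t₁ - s)) Filter.atBot (nhds 0) :=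
      Filter.Tendsto.div_atTop tendsto_const_nhds hsub
    have hexp : Filter.Tendsto (fun s => Real.exp (C * D / (t₁ - s))) Filter.atBot (nhds 1) := by
      simpa [Function.comp_def] using (Real.continuous_exp.tendsto 0).comp hlim
    have hexp2 : ∀ᶠ s in Filter.atBot, Real.exp (C * D / (t₁ - s)) < 2 :=
      hexp.eventually (Filter.Tendsto.eventually_lt_const one_lt_two Filter.tendsto_id)
    filter_upwards [Filter.eventually_lt_atBot t₁, hexp2] with s hs hE
    have harn := hHarnack w hwsol hwnn s t₁ hs ht₁ x₁ x y₁ y hy₁ hy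
    have hEpos : 0 < Real.exp (C * D / (t₁ - s)) := Real.exp_pos _
    have hCδ : C * δ < ε / 2 := by
      have h2 := (lt_div_iff₀ (by linarith : (0:ℝ) < 2 * C)).1 hδlt
      nlinarith
    have hw1 : w s x y ≤ C * δ * Real.exp (C * D / (t₁ - s)) := by
      simpa [hwdef, hδdef, hD] using harn
    have hw2 : C * δ * Real.exp (C * D / (t₁ - s)) ≤ C * δ * 2 :=
      mul_le_mul_of_nonneg_left hE.le (by positivity)
    have : w s x y < ε := lt_of_le_of_lt (hw1.trans hw2) (by linarith)
    simp only [hwdef] at this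
    linarith
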